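/- Let f : {0,1}^n → {0,1}^m satisfy the Simon promise for hidden string s = s₁s₂ with s₁ ≠ 0^{n−t}. Define S(u) as the concatenation of the 2^t values f(uw), w ∈ {0,1}^t, in lexicographic (sorted) order. Then for all u, v ∈ {0,1}^{n−t}: S(u) = S(v) if and only if u = v or u ⊕ v = s₁. (Main theorem of the paper.) -/

import Mathlib

private lemma append_add {k t : ℕ} (u v : Fin k → ZMod 2) (w w' : Fin t → ZMod 2) :
    Fin.append u w + Fin.append v w' = Fin.append (u + v) (w + w') := by
  funext i
  refine Fin.addCases (fun i => ?_) (fun i => ?_) i <;>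
    simp [Fin.append_left, Fin.append_right]

private lemma append_inj {k t : ℕ} {u v : Fin k → ZMod 2} {w w' : Fin t → ZMod 2}
    (h : Fin.append u w = Fin.append v w') : u = v ∧ w = w' := by
  constructor
  · funext i
    have := congrFun h (Fin.castAdd t i)
    simpa [Fin.append_left] using this
  · funext i
    have := congrFun h (Fin.natAdd k i)
    simpa [Fin.append_right] using this

/-- Main theorem of the paper: with `s₁ ≠ 0`, the sorted concatenation `S(u)`
of the block values satisfies `S(u) = S(v) ↔ u = v ∨ u ⊕ v = s₁`. -/
theorem simon_sorted_values_promise (k t m : ℕ)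
    [LinearOrder (Fin m → ZMod 2)]
    (f : (Fin (k + t) → ZMod 2) → (Fin m → ZMod 2))
    (s₁ : Fin k → ZMod 2) (s₂ : Fin t → ZMod 2)
    (hs₁ : s₁ ≠ 0)
    (hf : ∀ x y, f x = f y ↔ (x = y ∨ x + y = Fin.append s₁ s₂)) :
    ∀ u v : Fin k → ZMod 2,
      (((Finset.univ : Finset (Fin t → ZMod 2)).toList.map
          (fun w => f (Fin.append u w))).mergeSort (fun a b => decide (a ≤ b))
        = ((Finset.univ : Finset (Fin t → ZMod 2)).toList.map
          (fun w => f (Fin.append v w))).mergeSort (fun a b => decide (a ≤ b)))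
      ↔ (u = v ∨ u + v = s₁) := by
  intro u v
  set L : (Fin k → ZMod 2) → List (Fin m → ZMod 2) :=
    fun u => (Finset.univ : Finset (Fin t → ZMod 2)).toList.map
      (fun w => f (Fin.append u w)) with hL
  have two_eq_zero : ∀ w : Fin t → ZMod 2, w + w = 0 := by
    intro w; funext i; exact CharTwo.add_self_eq_zero (w i)
  constructor
  · intro h
    have hperm : (L u).Perm (L v) :=
      ((L u).mergeSort_perm _).symm.trans (h ▸ (L v).mergeSort_perm _)
    by_contra hc
    push_neg at hc
    obtain ⟨hne, hns⟩ := hc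
    -- pick element of L u
    have hmem : f (Fin.append u 0) ∈ L u := by
      simp only [hL, List.mem_map]
      exact ⟨0, by simp, rfl⟩
    have hmem' : f (Fin.append u 0) ∈ L v := hperm.mem_iff.mp hmem
    simp only [hL, List.mem_map] at hmem'
    obtain ⟨w', -, hw'⟩ := hmem'
    rcases (hf _ _).mp hw'.symm with heq | heq
    · exact hne (append_inj heq.symm).1.symm
    · rw [append_add] at heq
      exact hns (append_inj heq).1
  · intro h
    have hperm : (L u).Perm (L v) := by
      rcases h with rfl | h
      · exact List.Perm.refl _
      · -- L u = map (fun w => f (append v w)) (map (· + s₂) univ.toList)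
        have key : L u = ((Finset.univ : Finset (Fin t → ZMod 2)).toList.map
            (fun w => w + s₂)).map (fun w => f (Fin.append v w)) := by
          rw [List.map_map]
          apply List.map_congr_left
          intro w _
          apply (hf _ _).mpr
          right
          rw [show ((fun w => w + s₂) w) = w + s₂ from rfl, append_add, h]
          congr 1
          rw [← add_assoc, two_eq_zero, zero_add]
        rw [key, hL]
        apply List.Perm.map
        rw [← Multiset.coe_eq_coe, ← Multiset.map_coe, Finset.coe_toList]
        have h2 := congrArg Finset.val (Finset.map_univ_equiv (Equiv.addRight s₂))
        rwa [Finset.map_val, Equiv.coe_toEmbedding, Equiv.coe_addRight] at h2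
    exact List.Perm.eq_of_pairwise' (r := (· ≤ ·))
      (by simpa using List.pairwise_mergeSort' (· ≤ ·) (L u))
      (by simpa using List.pairwise_mergeSort' (· ≤ ·) (L v))
      (((L u).mergeSort_perm _).trans (hperm.trans ((L v).mergeSort_perm _).symm))
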